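/- Let 0 < q < 1. For every integer p ≥ 1 and every finite collection of points x_1,...,x_n ∈ ℝ^p, there exist points y_1,...,y_n in a real Hilbert space such that ‖y_i − y_j‖² = ‖x_i − x_j‖^{2q} for all i, j. That is, the power transformation φ(D) = D^q is a Schoenberg transformation. -/

import Mathlib

noncomputable section SchoenbergAuxSection
open Finset Set MeasureTheory Real
namespace Schoenberg

/-- base integral -/
def Iq (q : ℝ) : ℝ := ∫ s in Set.Ioi (0:ℝ), s ^ (-1 - q) * (1 - Real.exp (-s))

lemma one_sub_exp_neg_le {s : ℝ} : 1 - Real.exp (-s) ≤ s := by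
  nlinarith [Real.add_one_le_exp (-s)]

lemma one_sub_exp_neg_nonneg {s : ℝ} (hs : 0 ≤ s) : 0 ≤ 1 - Real.exp (-s) := by
  have : Real.exp (-s) ≤ 1 := Real.exp_le_one_iff.mpr (by linarith)
  linarith

lemma kernel_meas (q c : ℝ) :
    Measurable fun s : ℝ => s ^ (-1 - q) * (1 - Real.exp (-(s * c))) := by
  fun_prop

lemma integrableOn_kernel {q : ℝ} (hq0 : 0 < q) (hq1 : q < 1) {c : ℝ} (hc : 0 ≤ c) :
    IntegrableOn (fun s : ℝ => s ^ (-1 - q) * (1 - Real.exp (-(s * c)))) (Ioi 0) := by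
  rw [show Ioi (0:ℝ) = Set.Ioc 0 1 ∪ Ioi 1 from (Set.Ioc_union_Ioi_eq_Ioi zero_le_one).symm]
  apply IntegrableOn.union
  · -- on Ioc 0 1, bound by c * s ^ (-q)
    have hint : IntegrableOn (fun s : ℝ => c * s ^ (-q)) (Set.Ioc 0 1) := by
      have := (intervalIntegral.intervalIntegrable_rpow' (show (-1:ℝ) < -q by linarith) (a := 0) (b := 1))
      rw [intervalIntegrable_iff_integrableOn_Ioc_of_le zero_le_one] at this
      exact this.const_mul c
    refine Integrable.mono' hint ((kernel_meas q c).aestronglyMeasurable) ?_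
    rw [ae_restrict_iff' measurableSet_Ioc]
    refine ae_of_all _ fun s hs => ?_
    obtain ⟨hs0, _⟩ := hs
    have h1 : (0:ℝ) ≤ 1 - Real.exp (-(s * c)) := one_sub_exp_neg_nonneg (by positivity)
    have h2 : 1 - Real.exp (-(s * c)) ≤ s * c := one_sub_exp_neg_le
    rw [Real.norm_eq_abs, abs_of_nonneg (by positivity)]
    calc s ^ (-1 - q) * (1 - Real.exp (-(s * c))) ≤ s ^ (-1 - q) * (s * c) := by
          exact mul_le_mul_of_nonneg_left h2 (by positivity)
      _ = c * (s ^ (-1 - q) * s ^ (1:ℝ)) := by rw [Real.rpow_one]; ring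
      _ = c * s ^ (-q) := by rw [← Real.rpow_add hs0]; ring_nf
  · have hint : IntegrableOn (fun s : ℝ => s ^ (-1 - q)) (Ioi 1) :=
      integrableOn_Ioi_rpow_of_lt (by linarith) one_pos
    refine Integrable.mono' hint ((kernel_meas q c).aestronglyMeasurable) ?_
    rw [ae_restrict_iff' measurableSet_Ioi]
    refine ae_of_all _ fun s hs => ?_
    have hs0 : (0:ℝ) < s := lt_trans one_pos hs
    have h1 : (0:ℝ) ≤ 1 - Real.exp (-(s * c)) := one_sub_exp_neg_nonneg (by positivity)
    have h2 : 1 - Real.exp (-(s * c)) ≤ 1 := by nlinarith [Real.exp_pos (-(s * c))]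
    rw [Real.norm_eq_abs, abs_of_nonneg (by positivity)]
    calc s ^ (-1 - q) * (1 - Real.exp (-(s * c))) ≤ s ^ (-1 - q) * 1 :=
          mul_le_mul_of_nonneg_left h2 (by positivity)
      _ = s ^ (-1 - q) := mul_one _

lemma kernel_value {q : ℝ} (hq0 : 0 < q) (hq1 : q < 1) {D : ℝ} (hD : 0 < D) :
    ∫ s in Ioi (0:ℝ), s ^ (-1 - q) * (1 - Real.exp (-(s * D))) = D ^ q * Iq q := by
  have h := integral_comp_mul_left_Ioi
    (fun u : ℝ => u ^ (-1 - q) * (1 - Real.exp (-u))) 0 hD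
  rw [mul_zero] at h
  have heq : EqOn (fun s : ℝ => s ^ (-1 - q) * (1 - Real.exp (-(s * D))))
      (fun s : ℝ => D ^ (1 + q) * ((D * s) ^ (-1 - q) * (1 - Real.exp (-(D * s))))) (Ioi 0) := by
    intro s hs
    have hs0 : (0:ℝ) < s := hs
    simp only []
    rw [Real.mul_rpow hD.le hs0.le, mul_comm s D]
    rw [show D ^ (1+q) * (D ^ (-1-q) * s ^ (-1-q) * (1 - Real.exp (-(D * s))))
        = (D ^ (1+q) * D ^ (-1-q)) * (s ^ (-1-q) * (1 - Real.exp (-(D * s)))) by ring]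
    rw [← Real.rpow_add hD]
    norm_num
  rw [setIntegral_congr_fun measurableSet_Ioi heq, integral_const_mul, h]
  rw [smul_eq_mul]
  have hIq : (∫ x in Ioi (0:ℝ), (fun u : ℝ => u ^ (-1 - q) * (1 - Real.exp (-u))) x) = Iq q := rfl
  rw [hIq]
  rw [show D ^ (1 + q) * (D⁻¹ * Iq q) = (D ^ (1+q) * D ^ (-1:ℝ)) * Iq q by
    rw [Real.rpow_neg_one]; ring]
  rw [← Real.rpow_add hD]
  ring_nf

lemma Iq_pos {q : ℝ} (hq0 : 0 < q) (hq1 : q < 1) : 0 < Iq q := by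
  have hker := integrableOn_kernel hq0 hq1 (c := 1) zero_le_one
  simp only [mul_one] at hker
  have h2 : ∫ s in Ioi (1:ℝ), (1 - Real.exp (-1)) * s ^ (-1 - q)
      ≤ ∫ s in Ioi (1:ℝ), s ^ (-1 - q) * (1 - Real.exp (-s)) := by
    apply setIntegral_mono_on
    · exact (integrableOn_Ioi_rpow_of_lt (by linarith) one_pos).const_mul _
    · exact (hker.mono_set (Ioi_subset_Ioi zero_le_one))
    · exact measurableSet_Ioi
    · intro s hs
      have hs1 : (1:ℝ) < s := hs
      have hs0 : (0:ℝ) < s := lt_trans one_pos hs1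
      have : Real.exp (-s) ≤ Real.exp (-1) := Real.exp_le_exp.mpr (by linarith)
      have hnn : (0:ℝ) ≤ s ^ (-1 - q) := by positivity
      nlinarith
  have h3 : ∫ s in Ioi (1:ℝ), (1 - Real.exp (-1)) * s ^ (-1 - q)
      = (1 - Real.exp (-1)) * (-1 / -q) := by
    rw [integral_const_mul, integral_Ioi_rpow_of_lt (by linarith) one_pos]
    rw [show (-1 - q + 1 : ℝ) = -q by ring, Real.one_rpow]
  have h4 : ∫ s in Ioi (1:ℝ), s ^ (-1 - q) * (1 - Real.exp (-s)) ≤ Iq q := by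
    apply setIntegral_mono_set hker
    · filter_upwards [self_mem_ae_restrict (measurableSet_Ioi : MeasurableSet (Ioi (0:ℝ)))]
        with s hs
      have hs0 : (0:ℝ) < s := hs
      have := one_sub_exp_neg_nonneg hs0.le
      positivity
    · exact (Set.Ioi_subset_Ioi zero_le_one).eventuallyLE
  have hexp : Real.exp (-1) < 1 := Real.exp_lt_one_iff.mpr (by norm_num)
  have : 0 < (1 - Real.exp (-1)) * (-1 / -q) := by
    apply mul_pos (by linarith)
    rw [neg_div_neg_eq]
    positivity
  linarith




variable {p : ℕ}

local notation "E" => EuclideanSpace ℝ (Fin p)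

lemma integrable_gauss {b : ℝ} (hb : 0 < b) :
    Integrable (fun v : E => Real.exp (-b * ‖v‖ ^ 2)) := by
  have h := GaussianFourier.integrable_cexp_neg_mul_sq_norm_add (V := E) (b := (b:ℂ))
    (by simpa using hb) 0 0
  have h2 := h.norm
  refine h2.congr (ae_of_all _ fun v => ?_)
  simp [Complex.norm_exp]
  left
  norm_cast

lemma gauss_key {b : ℝ} (x y t : E) :
    Real.exp (-b * ‖x - t‖ ^ 2) * Real.exp (-b * ‖y - t‖ ^ 2)
      = Real.exp (-(2 * b) * ‖t - (2:ℝ)⁻¹ • (x + y)‖ ^ 2) * Real.exp (-(b / 2) * ‖x - y‖ ^ 2) := by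
  rw [← Real.exp_add, ← Real.exp_add]
  congr 1
  have hpar := parallelogram_law_with_norm ℝ (x - t) (y - t)
  have h1 : x - t + (y - t) = (2:ℝ) • ((2:ℝ)⁻¹ • (x + y) - t) := by
    rw [smul_sub, smul_inv_smul₀ (by norm_num : (2:ℝ) ≠ 0)]
    rw [show (2:ℝ) • t = t + t from two_smul ℝ t]
    abel
  have h3 : x - t - (y - t) = x - y := by abel
  rw [h1, h3] at hpar
  rw [norm_smul] at hpar
  rw [← norm_neg ((2:ℝ)⁻¹ • (x + y) - t), neg_sub] at hpar
  simp only [Real.norm_ofNat] at hpar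
  linear_combination (b / 2) * hpar

lemma gauss_conv {b : ℝ} (hb : 0 < b) (x y : E) :
    ∫ t : E, Real.exp (-b * ‖x - t‖ ^ 2) * Real.exp (-b * ‖y - t‖ ^ 2)
      = (π / (2 * b)) ^ ((p:ℝ) / 2) * Real.exp (-(b / 2) * ‖x - y‖ ^ 2) := by
  simp_rw [gauss_key x y]
  rw [integral_mul_const]
  congr 1
  have ht : ∫ t : E, Real.exp (-(2 * b) * ‖t - (2:ℝ)⁻¹ • (x + y)‖ ^ 2)
      = ∫ t : E, Real.exp (-(2 * b) * ‖t‖ ^ 2) :=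
    integral_sub_right_eq_self (fun t : E => Real.exp (-(2 * b) * ‖t‖ ^ 2)) _
  rw [ht, GaussianFourier.integral_rexp_neg_mul_sq_norm (by linarith)]
  rw [finrank_euclideanSpace_fin]

lemma gauss_conv_integrable {b : ℝ} (hb : 0 < b) (x y : E) :
    Integrable (fun t : E => Real.exp (-b * ‖x - t‖ ^ 2) * Real.exp (-b * ‖y - t‖ ^ 2)) := by
  simp_rw [gauss_key x y]
  apply Integrable.mul_const
  exact (integrable_gauss (by linarith : (0:ℝ) < 2 * b)).comp_sub_right _

lemma gauss_diff_sq_integrable {b : ℝ} (hb : 0 < b) (x y : E) :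
    Integrable (fun t : E => (Real.exp (-b * ‖x - t‖ ^ 2) - Real.exp (-b * ‖y - t‖ ^ 2)) ^ 2) := by
  have h := ((gauss_conv_integrable hb x x).sub ((gauss_conv_integrable hb x y).const_mul 2)).add
    (gauss_conv_integrable hb y y)
  refine h.congr (ae_of_all _ fun t => ?_)
  simp only [Pi.add_apply, Pi.sub_apply]
  ring

lemma gauss_diff_sq {b : ℝ} (hb : 0 < b) (x y : E) :
    ∫ t : E, (Real.exp (-b * ‖x - t‖ ^ 2) - Real.exp (-b * ‖y - t‖ ^ 2)) ^ 2
      = 2 * (π / (2 * b)) ^ ((p:ℝ) / 2) * (1 - Real.exp (-(b / 2) * ‖x - y‖ ^ 2)) := by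
  have heq : ∀ t : E, (Real.exp (-b * ‖x - t‖ ^ 2) - Real.exp (-b * ‖y - t‖ ^ 2)) ^ 2
      = Real.exp (-b * ‖x - t‖ ^ 2) * Real.exp (-b * ‖x - t‖ ^ 2)
        - 2 * (Real.exp (-b * ‖x - t‖ ^ 2) * Real.exp (-b * ‖y - t‖ ^ 2))
        + Real.exp (-b * ‖y - t‖ ^ 2) * Real.exp (-b * ‖y - t‖ ^ 2) := fun t => by ring
  simp_rw [heq]
  have hAA := gauss_conv_integrable hb x x
  have hAB := (gauss_conv_integrable hb x y).const_mul 2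
  have hBB := gauss_conv_integrable hb y y
  have h1 : Integrable (fun t : E => Real.exp (-b * ‖x - t‖ ^ 2) * Real.exp (-b * ‖x - t‖ ^ 2)
      - 2 * (Real.exp (-b * ‖x - t‖ ^ 2) * Real.exp (-b * ‖y - t‖ ^ 2))) := by
    have := hAA.sub hAB
    simpa [Pi.sub_def] using this
  rw [integral_add h1 hBB, integral_sub hAA hAB, integral_const_mul,
    gauss_conv hb x x, gauss_conv hb x y, gauss_conv hb y y]
  simp only [sub_self, norm_zero]
  norm_num [Real.exp_zero]
  ring


def bβ (q : ℝ) (p : ℕ) : ℝ := ((p:ℝ)/2 - 1 - q)/2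

def Xc (q : ℝ) (p : ℕ) : ℝ := 2 * (π/4) ^ ((p:ℝ)/2) * Iq q

def Cc (q : ℝ) (p : ℕ) : ℝ := (Xc q p)⁻¹ ^ ((2:ℝ)⁻¹)

def F (q : ℝ) (p : ℕ) (x y : EuclideanSpace ℝ (Fin p)) : ℝ × EuclideanSpace ℝ (Fin p) → ℝ :=
  fun z => Set.indicator {w : ℝ × EuclideanSpace ℝ (Fin p) | 0 < w.1}
    (fun w => Cc q p * w.1 ^ bβ q p *
      (Real.exp (-(2 * w.1) * ‖x - w.2‖ ^ 2) - Real.exp (-(2 * w.1) * ‖y - w.2‖ ^ 2))) z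

lemma Xc_pos {q : ℝ} (hq0 : 0 < q) (hq1 : q < 1) (p : ℕ) : 0 < Xc q p := by
  have h1 : (0:ℝ) < (π/4) ^ ((p:ℝ)/2) := Real.rpow_pos_of_pos (by positivity) _
  have h2 := Iq_pos hq0 hq1
  unfold Xc
  positivity

lemma Cc_sq {q : ℝ} (hq0 : 0 < q) (hq1 : q < 1) (p : ℕ) : (Cc q p) ^ 2 = (Xc q p)⁻¹ := by
  have hX := Xc_pos hq0 hq1 p
  unfold Cc
  rw [← Real.rpow_natCast ((Xc q p)⁻¹ ^ ((2:ℝ)⁻¹)) 2, ← Real.rpow_mul (by positivity)]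
  norm_num

lemma F_sub {q : ℝ} {p : ℕ} (x y z : EuclideanSpace ℝ (Fin p)) (w : ℝ × EuclideanSpace ℝ (Fin p)) :
    F q p x z w - F q p y z w = F q p x y w := by
  by_cases h : 0 < w.1
  · simp only [F, Set.indicator_of_mem (show w ∈ {w : ℝ × EuclideanSpace ℝ (Fin p) | 0 < w.1} from h)]
    ring
  · simp only [F, Set.indicator_of_notMem (show w ∉ {w : ℝ × EuclideanSpace ℝ (Fin p) | 0 < w.1} from h)]
    ring

lemma F_meas {q : ℝ} {p : ℕ} (x y : EuclideanSpace ℝ (Fin p)) : Measurable (F q p x y) := by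
  apply Measurable.indicator
  · fun_prop
  · exact measurableSet_lt measurable_const measurable_fst

lemma F_inner_int {q : ℝ} {p : ℕ} (hq0 : 0 < q) (hq1 : q < 1) {s : ℝ} (hs : 0 < s)
    (x y : EuclideanSpace ℝ (Fin p)) :
    ∫ t : EuclideanSpace ℝ (Fin p), (F q p x y (s, t)) ^ 2
      = (Cc q p ^ 2 * (2 * (π/4) ^ ((p:ℝ)/2)))
        * (s ^ (-1 - q) * (1 - Real.exp (-(s * ‖x - y‖ ^ 2)))) := by
  have hmem : ∀ t : EuclideanSpace ℝ (Fin p),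
      ((s, t) : ℝ × EuclideanSpace ℝ (Fin p)) ∈ {w : ℝ × EuclideanSpace ℝ (Fin p) | 0 < w.1} :=
    fun t => hs
  simp only [F, Set.indicator_of_mem (hmem _)]
  simp_rw [mul_pow]
  rw [integral_const_mul, gauss_diff_sq (by linarith : (0:ℝ) < 2 * s) x y]
  have h1 : (π / (2 * (2 * s))) ^ ((p:ℝ)/2) = (π/4) ^ ((p:ℝ)/2) * s ^ (-((p:ℝ)/2)) := by
    rw [show π / (2 * (2 * s)) = (π/4) * s⁻¹ by rw [div_mul_eq_div_div]; ring]
    rw [Real.mul_rpow (by positivity) (by positivity), Real.inv_rpow hs.le,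
      ← Real.rpow_neg hs.le]
  have h2 : (s ^ bβ q p) ^ (2:ℕ) * s ^ (-((p:ℝ)/2)) = s ^ (-1 - q) := by
    rw [← Real.rpow_natCast (s ^ bβ q p) 2, ← Real.rpow_mul hs.le, ← Real.rpow_add hs]
    congr 1
    unfold bβ
    push_cast
    ring
  have h3 : -(2 * s / 2) * ‖x - y‖ ^ 2 = -(s * ‖x - y‖ ^ 2) := by ring
  rw [h1, h3]
  calc Cc q p ^ 2 * (s ^ bβ q p) ^ 2
        * (2 * ((π/4) ^ ((p:ℝ)/2) * s ^ (-((p:ℝ)/2))) * (1 - Real.exp (-(s * ‖x - y‖ ^ 2))))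
      = (Cc q p ^ 2 * (2 * (π/4) ^ ((p:ℝ)/2)))
        * (((s ^ bβ q p) ^ (2:ℕ) * s ^ (-((p:ℝ)/2))) * (1 - Real.exp (-(s * ‖x - y‖ ^ 2)))) := by
        ring
    _ = (Cc q p ^ 2 * (2 * (π/4) ^ ((p:ℝ)/2)))
        * (s ^ (-1 - q) * (1 - Real.exp (-(s * ‖x - y‖ ^ 2)))) := by rw [h2]


lemma F_zero_of_nonpos {q : ℝ} {p : ℕ} (x y : EuclideanSpace ℝ (Fin p)) {s : ℝ} (hs : ¬ 0 < s)
    (t : EuclideanSpace ℝ (Fin p)) : F q p x y (s, t) = 0 := by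
  simp only [F]
  exact Set.indicator_of_notMem (by simpa using hs) _

lemma F_main {q : ℝ} {p : ℕ} (hq0 : 0 < q) (hq1 : q < 1) (x y : EuclideanSpace ℝ (Fin p)) :
    Integrable (fun z : ℝ × EuclideanSpace ℝ (Fin p) => (F q p x y z) ^ 2) volume ∧
    ∫ z : ℝ × EuclideanSpace ℝ (Fin p), (F q p x y z) ^ 2 = ‖x - y‖ ^ (2 * q) := by
  by_cases hxy : x = y
  · subst hxy
    have hF : F q p x x = fun _ => 0 := by
      funext w
      simp [F, Set.indicator_apply]
    rw [hF]
    constructor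
    · simpa using integrable_zero (ℝ × EuclideanSpace ℝ (Fin p)) ℝ volume
    · simp [Real.zero_rpow (show (2*q) ≠ 0 from ne_of_gt (by linarith))]
  · have hxy' : x - y ≠ 0 := sub_ne_zero.mpr hxy
    have hD : 0 < ‖x - y‖ ^ 2 := pow_pos (norm_pos_iff.mpr hxy') 2
    set c' : ℝ := Cc q p ^ 2 * (2 * (π/4) ^ ((p:ℝ)/2)) with hc'
    have hsec : ∀ s : ℝ, Integrable (fun t : EuclideanSpace ℝ (Fin p) => (F q p x y (s, t)) ^ 2)
        volume := by
      intro s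
      by_cases hs : 0 < s
      · have hint := (gauss_diff_sq_integrable (show (0:ℝ) < 2 * s by linarith) x y).const_mul
          ((Cc q p * s ^ bβ q p) ^ 2)
        refine hint.congr (ae_of_all _ fun t => ?_)
        simp only [F, Set.indicator_of_mem
          (show ((s, t) : ℝ × EuclideanSpace ℝ (Fin p)) ∈ {w : ℝ × EuclideanSpace ℝ (Fin p) | 0 < w.1} from hs)]
        ring
      · have hz : (fun t : EuclideanSpace ℝ (Fin p) => (F q p x y (s, t)) ^ 2) = fun _ => 0 := by
          funext t
          rw [F_zero_of_nonpos x y hs t]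
          norm_num
        rw [hz]
        simpa using integrable_zero (EuclideanSpace ℝ (Fin p)) ℝ volume
    have houter : ∀ s : ℝ, (∫ t : EuclideanSpace ℝ (Fin p), (F q p x y (s, t)) ^ 2)
        = Set.indicator (Ioi (0:ℝ))
          (fun u => c' * (u ^ (-1 - q) * (1 - Real.exp (-(u * ‖x - y‖ ^ 2))))) s := by
      intro s
      by_cases hs : 0 < s
      · rw [F_inner_int hq0 hq1 hs x y,
          Set.indicator_of_mem (show s ∈ Set.Ioi (0:ℝ) from hs)]
      · rw [Set.indicator_of_notMem (by simpa using hs)]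
        have hz : (fun t : EuclideanSpace ℝ (Fin p) => (F q p x y (s, t)) ^ 2) = fun _ => 0 := by
          funext t
          rw [F_zero_of_nonpos x y hs t]
          norm_num
        rw [hz, integral_zero]
    have hker : IntegrableOn
        (fun u : ℝ => c' * (u ^ (-1 - q) * (1 - Real.exp (-(u * ‖x - y‖ ^ 2))))) (Ioi 0) :=
      (integrableOn_kernel hq0 hq1 hD.le).const_mul c'
    have houter_int : Integrable (Set.indicator (Ioi (0:ℝ))
        (fun u => c' * (u ^ (-1 - q) * (1 - Real.exp (-(u * ‖x - y‖ ^ 2)))))) volume :=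
      (integrable_indicator_iff measurableSet_Ioi).2 hker
    have hmeas : AEStronglyMeasurable
        (fun z : ℝ × EuclideanSpace ℝ (Fin p) => (F q p x y z) ^ 2)
        ((volume : Measure ℝ).prod (volume : Measure (EuclideanSpace ℝ (Fin p)))) := by
      rw [← Measure.volume_eq_prod]
      exact ((F_meas x y).pow_const 2).aestronglyMeasurable
    have hint : Integrable (fun z : ℝ × EuclideanSpace ℝ (Fin p) => (F q p x y z) ^ 2)
        ((volume : Measure ℝ).prod (volume : Measure (EuclideanSpace ℝ (Fin p)))) := by
      refine (integrable_prod_iff hmeas).2 ⟨ae_of_all _ hsec, ?_⟩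
      refine houter_int.congr (ae_of_all _ fun s => ?_)
      have hnrm : ∀ t : EuclideanSpace ℝ (Fin p),
          ‖(F q p x y (s, t)) ^ 2‖ = (F q p x y (s, t)) ^ 2 := fun t => by
        rw [Real.norm_eq_abs, abs_of_nonneg (sq_nonneg _)]
      simp_rw [hnrm]
      exact (houter s).symm
    have hX := Xc_pos hq0 hq1 p
    have hCX : c' * Iq q = 1 := by
      rw [hc', Cc_sq hq0 hq1 p]
      rw [show (Xc q p)⁻¹ * (2 * (π/4) ^ ((p:ℝ)/2)) * Iq q = (Xc q p)⁻¹ * Xc q p by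
        unfold Xc; ring]
      exact inv_mul_cancel₀ hX.ne'
    constructor
    · rw [show (volume : Measure (ℝ × EuclideanSpace ℝ (Fin p)))
          = (volume : Measure ℝ).prod (volume : Measure (EuclideanSpace ℝ (Fin p)))
          from Measure.volume_eq_prod _ _]
      exact hint
    · rw [show (volume : Measure (ℝ × EuclideanSpace ℝ (Fin p)))
          = (volume : Measure ℝ).prod (volume : Measure (EuclideanSpace ℝ (Fin p)))
          from Measure.volume_eq_prod _ _]
      rw [integral_prod _ hint]
      simp_rw [houter]
      rw [integral_indicator measurableSet_Ioi, integral_const_mul,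
        kernel_value hq0 hq1 hD]
      rw [show c' * ((‖x - y‖ ^ 2) ^ q * Iq q) = (c' * Iq q) * (‖x - y‖ ^ 2) ^ q by ring,
        hCX, one_mul]
      rw [← Real.rpow_natCast ‖x - y‖ 2, ← Real.rpow_mul (norm_nonneg _)]
      norm_num

lemma F_memLp {q : ℝ} {p : ℕ} (hq0 : 0 < q) (hq1 : q < 1) (x y : EuclideanSpace ℝ (Fin p)) :
    MemLp (F q p x y) 2 (volume : Measure (ℝ × EuclideanSpace ℝ (Fin p))) :=
  (memLp_two_iff_integrable_sq (F_meas x y).aestronglyMeasurable).2 (F_main hq0 hq1 x y).1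


lemma schoenberg_exists (q : ℝ) (hq0 : 0 < q) (hq1 : q < 1)
    (p n : ℕ) (x : Fin n → EuclideanSpace ℝ (Fin p)) :
    ∃ (H : Type) (inst : NormedAddCommGroup H),
      letI := inst
      ∃ (_ : InnerProductSpace ℝ H) (_ : CompleteSpace H) (y : Fin n → H),
        ∀ i j, ‖y i - y j‖ ^ 2 = ‖x i - x j‖ ^ (2 * q) := by
  classical
  set μ2 : Measure (ℝ × EuclideanSpace ℝ (Fin p)) := volume with hμ2
  refine ⟨Lp ℝ 2 μ2, inferInstance, inferInstance, inferInstance,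
    fun i => (Schoenberg.F_memLp hq0 hq1 (x i) 0).toLp _, fun i j => ?_⟩
  set yi := (Schoenberg.F_memLp hq0 hq1 (x i) 0).toLp _ with hyi
  set yj := (Schoenberg.F_memLp hq0 hq1 (x j) 0).toLp _ with hyj
  have hcoe : (yi - yj : Lp ℝ 2 μ2) =ᵐ[μ2]
      fun z => Schoenberg.F q p (x i) (x j) z := by
    filter_upwards [Lp.coeFn_sub yi yj,
      (Schoenberg.F_memLp hq0 hq1 (x i) 0).coeFn_toLp,
      (Schoenberg.F_memLp hq0 hq1 (x j) 0).coeFn_toLp] with z h1 h2 h3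
    rw [h1, Pi.sub_apply, h2, h3, Schoenberg.F_sub]
  calc ‖yi - yj‖ ^ 2 = (inner ℝ (yi - yj) (yi - yj) : ℝ) :=
        (real_inner_self_eq_norm_sq _).symm
    _ = ∫ z, (inner ℝ ((yi - yj : Lp ℝ 2 μ2) z) ((yi - yj : Lp ℝ 2 μ2) z) : ℝ) ∂μ2 :=
        MeasureTheory.L2.inner_def _ _
    _ = ∫ z, (Schoenberg.F q p (x i) (x j) z) ^ 2 ∂μ2 := by
        refine integral_congr_ae (hcoe.mono fun z hz => ?_)
        simp only [RCLike.inner_apply, starRingEnd_apply, star_trivial, hz]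
        ring
    _ = ‖x i - x j‖ ^ (2 * q) := (Schoenberg.F_main hq0 hq1 (x i) (x j)).2

end Schoenberg
end SchoenbergAuxSection

open Finset Set

/-- `d` is realizable as the matrix of squared distances between `n` points of a
real Hilbert space. -/
def IsHilbertSqDistMatrix {n : ℕ} (d : Fin n → Fin n → ℝ) : Prop :=
  ∃ (H : Type) (inst : NormedAddCommGroup H),
    letI := inst
    ∃ (_ : InnerProductSpace ℝ H) (_ : CompleteSpace H) (y : Fin n → H),
      ∀ i j, ‖y i - y j‖ ^ 2 = d i j

/-- The power transformation `φ(D) = D^q`, `0 < q < 1`, is a Schoenberg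
transformation: for every configuration of points in `ℝ^p` there are points of a real
Hilbert space with `‖y i - y j‖² = ‖x i - x j‖^(2q)`. -/
theorem power_is_schoenberg (q : ℝ) (hq0 : 0 < q) (hq1 : q < 1)
    (p n : ℕ) (hp : 1 ≤ p) (x : Fin n → EuclideanSpace ℝ (Fin p)) :
    IsHilbertSqDistMatrix (fun i j => ‖x i - x j‖ ^ (2 * q)) := by
  exact Schoenberg.schoenberg_exists q hq0 hq1 p n x
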